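/- arXiv:2109.08602 — 3 statements merged into one kernel-verified Lean document; each statement's English description precedes it below -/
import Mathlib

section
/- Fix an integer r ≥ 4, an integer q₁ ≥ 2, and real numbers s, t > 0. Then, as m → ∞ (over integers m ≥ q₁): (i) a^{int2,r}_m(t)/m^s → 0; (ii) a^{int1,r}_m(t)/a^{int2,r}_m(s) → 0; (iii) (ln m)^t / a^{int1,r}_m(s) → 0. In particular the intermediate scales grow faster than every logarithmic scale and slower than every polynomial scale. -/
open Filter
open scoped Topology

noncomputable section

/-- `Γ_r(x) = (Γ(x^{1/r} + 1))^r`, where `Γ` is the Euler Gamma function. -/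
def GammaR (r : ℕ) (x : ℝ) : ℝ := (Real.Gamma (x ^ ((r : ℝ)⁻¹) + 1)) ^ r

/-- The inverse of `Γ_r` on `[1,∞)` (where `Γ_r` is strictly increasing with `Γ_r 1 = 1`). -/
def GammaRInv (r : ℕ) (y : ℝ) : ℝ := sSup {x : ℝ | 1 ≤ x ∧ GammaR r x ≤ y}

/-- The intermediate scaling family `a^{int1,r}_m(t) = m^(t / Γ_r⁻¹(ln m / ln q₁))`. -/
def intScale1 (r q₁ : ℕ) (m : ℕ) (t : ℝ) : ℝ :=
  (m : ℝ) ^ (t / GammaRInv r (Real.log m / Real.log q₁))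

/-- The intermediate scaling family
`a^{int2,r}_m(t) = m^(t / (Γ_r⁻¹(ln m / ln q₁))^((r-2)/r))`. -/
def intScale2 (r q₁ : ℕ) (m : ℕ) (t : ℝ) : ℝ :=
  (m : ℝ) ^ (t / GammaRInv r (Real.log m / Real.log q₁) ^ (((r : ℝ) - 2) / (r : ℝ)))

/-- The logarithmic scaling family `a^{ln}_m(t) = (ln m)^t`. -/
def logScale (m : ℕ) (t : ℝ) : ℝ := Real.log m ^ t

/-- The polynomial scaling family `a^{pol}_m(t) = m^t`. -/
def polScale (m : ℕ) (t : ℝ) : ℝ := (m : ℝ) ^ t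

end

open Filter Real
open scoped Topology

lemma myaux_gamma_sq {u : ℝ} (hu : 5 ≤ u) : u ^ 2 ≤ Real.Gamma (u + 1) := by
  have h0 : u - 2 ≠ 0 := by nlinarith
  have h1 : u - 1 ≠ 0 := by nlinarith
  have h2 : u ≠ 0 := by nlinarith
  have e1 : Real.Gamma (u + 1) = u * ((u - 1) * ((u - 2) * Real.Gamma (u - 2))) := by
    rw [Real.Gamma_add_one h2]
    rw [show u = (u - 1) + 1 by ring, Real.Gamma_add_one h1]
    rw [show u - 1 = (u - 2) + 1 by ring, Real.Gamma_add_one h0]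
    ring_nf
  have hmono : (1 : ℝ) ≤ Real.Gamma (u - 2) := by
    have := (Real.Gamma_strictMonoOn_Ici.monotoneOn) (Set.mem_Ici.mpr (le_refl (2:ℝ)))
      (Set.mem_Ici.mpr (by linarith : (2:ℝ) ≤ u - 2)) (by linarith)
    rwa [Real.Gamma_two] at this
  have h3 : (0:ℝ) ≤ u * (u-1) * (u-2) := mul_nonneg (mul_nonneg (by linarith) (by linarith)) (by linarith)
  have h4 := mul_le_mul_of_nonneg_left hmono h3
  rw [e1]; nlinarith [h4]

lemma myaux_gammaR_ge_sq {r : ℕ} (hr : 4 ≤ r) {x : ℝ} (hx : (5:ℝ) ^ r ≤ x) :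
    x ^ 2 ≤ GammaR r x := by
  have hr0 : r ≠ 0 := by omega
  have hrpos : (0:ℝ) < (r:ℝ) := by exact_mod_cast Nat.pos_of_ne_zero hr0
  have hx0 : (0:ℝ) < x := lt_of_lt_of_le (by positivity) hx
  set u := x ^ ((r : ℝ)⁻¹) with hu_def
  have hu5 : (5:ℝ) ≤ u := by
    have h5 : ((5:ℝ) ^ r) ^ ((r:ℝ)⁻¹) = 5 := by
      rw [← Real.rpow_natCast (5:ℝ) r, ← Real.rpow_mul (by norm_num : (0:ℝ) ≤ 5),
        mul_inv_cancel₀ (ne_of_gt hrpos), Real.rpow_one]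
    calc (5:ℝ) = ((5:ℝ) ^ r) ^ ((r:ℝ)⁻¹) := h5.symm
      _ ≤ u := Real.rpow_le_rpow (by positivity) hx (by positivity)
  have hux : u ^ r = x := by
    rw [hu_def, ← Real.rpow_natCast (x ^ ((r:ℝ)⁻¹)) r, ← Real.rpow_mul hx0.le,
      inv_mul_cancel₀ (ne_of_gt hrpos), Real.rpow_one]
  have hg := myaux_gamma_sq hu5
  have : (u ^ 2) ^ r ≤ (Real.Gamma (u + 1)) ^ r := pow_le_pow_left₀ (by positivity) hg r
  calc x ^ 2 = (u ^ 2) ^ r := by rw [← hux]; ring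
    _ ≤ (Real.Gamma (u + 1)) ^ r := this
    _ = GammaR r x := rfl

lemma myaux_set_le {r : ℕ} (hr : 4 ≤ r) {y x : ℝ}
    (hx : x ∈ {x : ℝ | 1 ≤ x ∧ GammaR r x ≤ y}) :
    x ≤ max ((5:ℝ) ^ r) (Real.sqrt y) := by
  obtain ⟨hx1, hx2⟩ := hx
  rcases le_or_gt x ((5:ℝ) ^ r) with h | h
  · exact le_max_of_le_left h
  · refine le_max_of_le_right ?_
    have h2 : x ^ 2 ≤ y := (myaux_gammaR_ge_sq hr h.le).trans hx2
    exact (Real.le_sqrt (by linarith) (by nlinarith)).mpr h2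

lemma myaux_bdd {r : ℕ} (hr : 4 ≤ r) (y : ℝ) :
    BddAbove {x : ℝ | 1 ≤ x ∧ GammaR r x ≤ y} :=
  ⟨max ((5:ℝ) ^ r) (Real.sqrt y), fun _ hx => myaux_set_le hr hx⟩

lemma myaux_inv_le {r : ℕ} (hr : 4 ≤ r) (y : ℝ) :
    GammaRInv r y ≤ max ((5:ℝ) ^ r) (Real.sqrt y) :=
  Real.sSup_le (fun _ hx => myaux_set_le hr hx) (le_max_of_le_left (by positivity))

lemma myaux_inv_ge {r : ℕ} (hr : 4 ≤ r) {X y : ℝ} (hX : 1 ≤ X) (hy : GammaR r X ≤ y) :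
    X ≤ GammaRInv r y :=
  le_csSup (myaux_bdd hr y) ⟨hX, hy⟩

lemma myaux_inv_tendsto {r : ℕ} (hr : 4 ≤ r) :
    Tendsto (GammaRInv r) atTop atTop := by
  rw [tendsto_atTop]
  intro b
  filter_upwards [eventually_ge_atTop (GammaR r (max b 1))] with y hy
  exact le_trans (le_max_left b 1) (myaux_inv_ge hr (le_max_right b 1) hy)


set_option maxHeartbeats 1000000 in
/-- for any integer `r ≥ 4`, any base `q₁ ≥ 2` and any `s, t > 0`, the
intermediate scales satisfy `a^{int2,r}_m(t) = o(m^s)`, `a^{int1,r}_m(t) = o(a^{int2,r}_m(s))`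
and `(ln m)^t = o(a^{int1,r}_m(s))` as `m → ∞`. -/
theorem stmt11 (r q₁ : ℕ) (hr : 4 ≤ r) (hq : 2 ≤ q₁) (s t : ℝ) (hs : 0 < s) (ht : 0 < t) :
    Filter.Tendsto (fun m : ℕ => intScale2 r q₁ m t / polScale m s) Filter.atTop (𝓝 0) ∧
    Filter.Tendsto (fun m : ℕ => intScale1 r q₁ m t / intScale2 r q₁ m s) Filter.atTop (𝓝 0) ∧
    Filter.Tendsto (fun m : ℕ => logScale m t / intScale1 r q₁ m s) Filter.atTop (𝓝 0) := by
  have hrR : (4:ℝ) ≤ (r:ℝ) := by exact_mod_cast hr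
  have hq1 : (1:ℝ) < (q₁:ℝ) := by exact_mod_cast (by omega : 1 < q₁)
  have hlq : 0 < Real.log q₁ := Real.log_pos hq1
  have hlq4 : (1/4 : ℝ) ≤ Real.log q₁ := by
    have h2 : Real.log 2 ≤ Real.log q₁ :=
      Real.log_le_log (by norm_num) (by exact_mod_cast hq)
    nlinarith [Real.log_two_gt_d9]
  have hL : Tendsto (fun m : ℕ => Real.log m) atTop atTop :=
    Real.tendsto_log_atTop.comp tendsto_natCast_atTop_atTop
  have hg : Tendsto (fun m : ℕ => GammaRInv r (Real.log m / Real.log q₁)) atTop atTop :=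
    (myaux_inv_tendsto hr).comp (hL.atTop_div_const hlq)
  have hsqrt : Tendsto Real.sqrt atTop atTop := by
    rw [funext Real.sqrt_eq_rpow]
    exact tendsto_rpow_atTop (by norm_num)
  set α : ℝ := ((r:ℝ) - 2) / (r:ℝ) with hα_def
  have hrpos : (0:ℝ) < (r:ℝ) := by linarith
  have hα0 : 0 < α := div_pos (by linarith) hrpos
  have hα1 : α < 1 := by rw [div_lt_one hrpos]; linarith
  clear_value α
  have hE : ∀ᶠ m : ℕ in atTop,
      1 ≤ GammaRInv r (Real.log m / Real.log q₁) ∧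
      GammaRInv r (Real.log m / Real.log q₁) ≤ 2 * Real.sqrt (Real.log m) ∧
      1 ≤ Real.log m ∧ 0 < (m:ℝ) := by
    have e1 := hg.eventually_ge_atTop 1
    have e3 := hL.eventually_ge_atTop 1
    have e5 := hL.eventually_ge_atTop (((5:ℝ)^r) * ((5:ℝ)^r))
    have e4 : ∀ᶠ m : ℕ in atTop, (0:ℝ) < m := by
      filter_upwards [eventually_ge_atTop 1] with m hm
      exact_mod_cast Nat.lt_of_lt_of_le Nat.zero_lt_one hm
    filter_upwards [e1, e3, e4, e5] with m h1 h3 h4 h5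
    refine ⟨h1, ?_, h3, h4⟩
    have hL0 : (0:ℝ) ≤ Real.log m := by linarith
    have hb := myaux_inv_le hr (Real.log m / Real.log q₁)
    have hs1 : Real.sqrt (Real.log m / Real.log q₁) ≤ 2 * Real.sqrt (Real.log m) := by
      have h41 : Real.log m / Real.log q₁ ≤ 4 * Real.log m := by
        rw [div_le_iff₀ hlq]; nlinarith
      calc Real.sqrt (Real.log m / Real.log q₁) ≤ Real.sqrt (4 * Real.log m) :=
            Real.sqrt_le_sqrt h41
        _ = 2 * Real.sqrt (Real.log m) := by
            rw [Real.sqrt_mul (by norm_num) _, show (4:ℝ) = 2^2 by norm_num,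
              Real.sqrt_sq (by norm_num)]
    have hs2 : (5:ℝ)^r ≤ 2 * Real.sqrt (Real.log m) := by
      have h6 : (5:ℝ)^r ≤ Real.sqrt (Real.log m) := by
        rw [Real.le_sqrt (by positivity) hL0]
        nlinarith
      nlinarith [Real.sqrt_nonneg (Real.log m)]
    exact hb.trans (max_le hs2 hs1)
  refine ⟨?_, ?_, ?_⟩
  -- Part (i)
  · have hDlim : Tendsto (fun m : ℕ => Real.exp (Real.log m * (-(s/2)))) atTop (𝓝 0) :=
      Real.tendsto_exp_atBot.comp (hL.atTop_mul_const_of_neg (by linarith))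
    refine squeeze_zero' ?_ ?_ hDlim
    · filter_upwards [hE] with m ⟨h1, h2, h3, h4⟩
      exact div_nonneg (Real.rpow_nonneg h4.le _) (Real.rpow_nonneg h4.le _)
    · filter_upwards [hE, hg.eventually_ge_atTop (max 1 ((2*t/s) ^ (α⁻¹)))] with m hm hgm
      obtain ⟨h1, h2, h3, h4⟩ := hm
      unfold intScale2 polScale
      rw [← hα_def, Real.rpow_def_of_pos h4, Real.rpow_def_of_pos h4, ← Real.exp_sub,
        Real.exp_le_exp]
      set G := GammaRInv r (Real.log m / Real.log q₁) with hG_def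
      clear_value G
      have hgα : 2*t/s ≤ G ^ α := by
        have h2ts : (0:ℝ) ≤ 2*t/s := by positivity
        calc 2*t/s = ((2*t/s) ^ (α⁻¹)) ^ α := by
              rw [← Real.rpow_mul h2ts, inv_mul_cancel₀ (ne_of_gt hα0), Real.rpow_one]
          _ ≤ G ^ α := Real.rpow_le_rpow (by positivity)
              (le_trans (le_max_right _ _) hgm) hα0.le
      have hgα0 : (0:ℝ) < G ^ α := lt_of_lt_of_le (by positivity) hgα
      have hexp : t / G ^ α ≤ s/2 := by
        rw [div_le_iff₀ hgα0]
        have h7 : (s/2)*(2*t/s) = t := by field_simp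
        nlinarith [mul_le_mul_of_nonneg_left hgα (le_of_lt (half_pos hs)), h7]
      have hL0 : (0:ℝ) ≤ Real.log m := by linarith
      nlinarith [mul_le_mul_of_nonneg_left hexp hL0]
  -- Part (ii)
  · have hDlim : Tendsto (fun m : ℕ => Real.exp (Real.sqrt (Real.log m) * (-(s/4))))
        atTop (𝓝 0) :=
      Real.tendsto_exp_atBot.comp (((hsqrt.comp hL)).atTop_mul_const_of_neg (by linarith))
    refine squeeze_zero' ?_ ?_ hDlim
    · filter_upwards [hE] with m ⟨h1, h2, h3, h4⟩
      exact div_nonneg (Real.rpow_nonneg h4.le _) (Real.rpow_nonneg h4.le _)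
    · filter_upwards [hE, hg.eventually_ge_atTop (max 1 ((2*t/s) ^ ((1-α)⁻¹)))] with m hm hgm
      obtain ⟨h1, h2, h3, h4⟩ := hm
      unfold intScale1 intScale2
      rw [← hα_def, Real.rpow_def_of_pos h4, Real.rpow_def_of_pos h4, ← Real.exp_sub,
        Real.exp_le_exp]
      set G := GammaRInv r (Real.log m / Real.log q₁) with hG_def
      set L := Real.log m with hL_def
      set R := Real.sqrt L with hR_def
      have hRR : R * R = L := Real.mul_self_sqrt (by linarith)
      have hR0 : (0:ℝ) ≤ R := Real.sqrt_nonneg L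
      clear_value G L R
      have hGpos : (0:ℝ) < G := lt_of_lt_of_le one_pos h1
      have hA1 : (1:ℝ) ≤ G ^ α := by
        calc (1:ℝ) = 1 ^ α := (Real.one_rpow α).symm
          _ ≤ G ^ α := Real.rpow_le_rpow (by norm_num) h1 hα0.le
      have hApos : (0:ℝ) < G ^ α := lt_of_lt_of_le one_pos hA1
      have hAG : G ^ α ≤ G := by
        calc G ^ α ≤ G ^ (1:ℝ) := Real.rpow_le_rpow_of_exponent_le h1 hα1.le
          _ = G := Real.rpow_one G
      have hB : 2*t/s ≤ G ^ (1-α) := by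
        have h2ts : (0:ℝ) ≤ 2*t/s := by positivity
        calc 2*t/s = ((2*t/s) ^ ((1-α)⁻¹)) ^ (1-α) := by
              rw [← Real.rpow_mul h2ts, inv_mul_cancel₀ (by linarith), Real.rpow_one]
          _ ≤ G ^ (1-α) := Real.rpow_le_rpow (by positivity)
              (le_trans (le_max_right _ _) hgm) (by linarith)
      have hGAB : G = G ^ α * G ^ (1-α) := by
        rw [← Real.rpow_add hGpos, show α + (1-α) = 1 by ring, Real.rpow_one]
      have hstep : t / G ≤ (s/2) / G ^ α := by
        rw [div_le_div_iff₀ hGpos hApos]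
        have h5 : (s/2) * (G ^ α) * (2*t/s) ≤ (s/2) * (G ^ α) * G ^ (1-α) :=
          mul_le_mul_of_nonneg_left hB (by positivity)
        have h6 : (s/2) * (G ^ α) * (2*t/s) = t * G ^ α := by
          field_simp
        linarith [h5, h6, mul_le_mul_of_nonneg_left hGAB.le (le_of_lt (half_pos hs)), mul_le_mul_of_nonneg_left hGAB.ge (le_of_lt (half_pos hs))]
      have hL0 : (0:ℝ) ≤ L := by linarith
      have hA2R : G ^ α ≤ 2*R := hAG.trans h2
      have step1 : L * (t / G) ≤ L * ((s/2) / G ^ α) :=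
        mul_le_mul_of_nonneg_left hstep hL0
      have step2 : L * ((s/2) / G ^ α) - L * (s / G ^ α) = -((s/2) * (L / G ^ α)) := by
        field_simp
        ring
      have step3 : (s/4) * R ≤ (s/2) * (L / G ^ α) := by
        rw [show (s/2) * (L / G^α) = ((s/2)*L)/G^α from (mul_div_assoc _ _ _).symm,
          le_div_iff₀ hApos]
        nlinarith [mul_le_mul_of_nonneg_left hA2R
          (mul_nonneg (by linarith : (0:ℝ) ≤ s/4) hR0)]
      linarith [step1, step3, step2.symm.le, step2.le]
  -- Part (iii)
  · have hφ : Tendsto (fun u : ℝ => Real.log u * t - (s/2) * Real.sqrt u) atTop atBot := by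
      have h0 : Tendsto (fun u : ℝ => Real.log u / Real.sqrt u) atTop (𝓝 0) := by
        have h0' := (isLittleO_log_rpow_atTop
          (show (0:ℝ) < 1/2 by norm_num)).tendsto_div_nhds_zero
        simpa only [Real.sqrt_eq_rpow] using h0'
      have h1 : Tendsto (fun u : ℝ =>
          Real.sqrt u * (Real.log u / Real.sqrt u * t - s/2)) atTop atBot := by
        apply Filter.Tendsto.atTop_mul_neg (show (0:ℝ)*t - s/2 < 0 by nlinarith) hsqrt
        exact (h0.mul_const t).sub_const (s/2)
      refine h1.congr' ?_
      filter_upwards [eventually_ge_atTop (1:ℝ)] with u hu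
      have h2 : Real.sqrt u ≠ 0 := ne_of_gt (Real.sqrt_pos.mpr (by linarith))
      field_simp
    have hDlim : Tendsto (fun m : ℕ =>
        Real.exp (Real.log (Real.log m) * t - (s/2) * Real.sqrt (Real.log m)))
        atTop (𝓝 0) := Real.tendsto_exp_atBot.comp (hφ.comp hL)
    refine squeeze_zero' ?_ ?_ hDlim
    · filter_upwards [hE] with m ⟨h1, h2, h3, h4⟩
      exact div_nonneg (Real.rpow_nonneg (by linarith) _) (Real.rpow_nonneg h4.le _)
    · filter_upwards [hE] with m hm
      obtain ⟨h1, h2, h3, h4⟩ := hm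
      unfold logScale intScale1
      rw [Real.rpow_def_of_pos (show (0:ℝ) < Real.log m by linarith),
        Real.rpow_def_of_pos h4, ← Real.exp_sub, Real.exp_le_exp]
      set G := GammaRInv r (Real.log m / Real.log q₁) with hG_def
      set L := Real.log m with hL_def
      set R := Real.sqrt L with hR_def
      have hGpos : (0:ℝ) < G := lt_of_lt_of_le one_pos h1
      have hRR : R * R = L := Real.mul_self_sqrt (by linarith)
      have hR0 : (0:ℝ) ≤ R := Real.sqrt_nonneg L
      clear_value G L R
      have key : (s/2) * R ≤ L * (s / G) := by
        rw [show L * (s/G) = (L*s)/G from (mul_div_assoc _ _ _).symm, le_div_iff₀ hGpos]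
        nlinarith [mul_le_mul_of_nonneg_left h2
          (mul_nonneg (by linarith : (0:ℝ) ≤ s/2) hR0)]
      linarith
end

section
/- Fix an integer r ≥ 4 and an integer q₁ ≥ 2, and define recursively q_{n+1} = q_n^{n^r} for n ≥ 1. Then for every n ≥ 2 and every t > 0: q_n^{(n-1)^r t / n^r} ≤ a^{int1,r}_{q_n^{(n-1)^r}}(t) ≤ q_n^t, and q_n^{(n-1)^r t / n^{r-2}} ≤ a^{int2,r}_{q_n^{(n-1)^r}}(t) ≤ q_n^{(n-1)² t}. -/
open Filter
open scoped Topology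

lemma gammaR_mono {r : ℕ} (hr : 1 ≤ r) {x y : ℝ} (hx : 1 ≤ x) (hxy : x ≤ y) :
    GammaR r x ≤ GammaR r y := by
  unfold GammaR
  have hrpos : (0:ℝ) < (r : ℝ)⁻¹ := by
    have : (0:ℝ) < (r:ℝ) := by exact_mod_cast hr
    positivity
  have hu : (1:ℝ) ≤ x ^ ((r : ℝ)⁻¹) := Real.one_le_rpow hx hrpos.le
  have huv : x ^ ((r : ℝ)⁻¹) ≤ y ^ ((r : ℝ)⁻¹) :=
    Real.rpow_le_rpow (by linarith) hxy hrpos.le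
  have h2u : (2:ℝ) ≤ x ^ ((r : ℝ)⁻¹) + 1 := by linarith
  have h2v : (2:ℝ) ≤ y ^ ((r : ℝ)⁻¹) + 1 := by linarith
  have hmono : Real.Gamma (x ^ ((r : ℝ)⁻¹) + 1) ≤ Real.Gamma (y ^ ((r : ℝ)⁻¹) + 1) :=
    Real.Gamma_strictMonoOn_Ici.monotoneOn h2u h2v (by linarith)
  exact pow_le_pow_left₀ (Real.Gamma_pos_of_pos (by linarith)).le hmono r

lemma gammaR_nat (r : ℕ) (hr : 1 ≤ r) (k : ℕ) :
    GammaR r ((k : ℝ) ^ r) = ((Nat.factorial k : ℝ)) ^ r := by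
  have hrne : (r : ℝ) ≠ 0 := by exact_mod_cast Nat.one_le_iff_ne_zero.mp hr
  have h : ((k : ℝ) ^ r) ^ ((r : ℝ)⁻¹) = (k : ℝ) := by
    rw [← Real.rpow_natCast (k : ℝ) r, ← Real.rpow_mul (Nat.cast_nonneg k),
      mul_inv_cancel₀ hrne, Real.rpow_one]
  rw [GammaR, h, Real.Gamma_nat_eq_factorial]

/-- with `q_{n+1} = q_n^{n^r}` and `q_1 = q₁ ≥ 2`, for every `n ≥ 2` and
`t > 0` one has
`q_n^{(n-1)^r t / n^r} ≤ a^{int1,r}_{q_n^{(n-1)^r}}(t) ≤ q_n^t` and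
`q_n^{(n-1)^r t / n^{r-2}} ≤ a^{int2,r}_{q_n^{(n-1)^r}}(t) ≤ q_n^{(n-1)² t}`. -/
theorem stmt13 (r q₁ : ℕ) (hr : 4 ≤ r) (hq : 2 ≤ q₁) (q : ℕ → ℕ)
    (hq1 : q 1 = q₁) (hrec : ∀ n : ℕ, 1 ≤ n → q (n + 1) = q n ^ (n ^ r)) :
    ∀ n : ℕ, 2 ≤ n → ∀ t : ℝ, 0 < t →
      ((q n : ℝ) ^ (((n : ℝ) - 1) ^ r * t / (n : ℝ) ^ r) ≤
          intScale1 r q₁ (q n ^ ((n - 1) ^ r)) t ∧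
        intScale1 r q₁ (q n ^ ((n - 1) ^ r)) t ≤ (q n : ℝ) ^ t) ∧
      ((q n : ℝ) ^ (((n : ℝ) - 1) ^ r * t / (n : ℝ) ^ (r - 2)) ≤
          intScale2 r q₁ (q n ^ ((n - 1) ^ r)) t ∧
        intScale2 r q₁ (q n ^ ((n - 1) ^ r)) t ≤ (q n : ℝ) ^ (((n : ℝ) - 1) ^ 2 * t)) := by
  have hr1 : 1 ≤ r := by omega
  -- q n ≥ 2 for n ≥ 1
  have hq2 : ∀ n : ℕ, 1 ≤ n → 2 ≤ q n := by
    intro n hn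
    induction n with
    | zero => omega
    | succ m ih =>
      rcases Nat.eq_or_lt_of_le hn with h | h
      · rw [show m + 1 = 1 by omega, hq1]; exact hq
      · have hm : 1 ≤ m := by omega
        rw [hrec m hm]
        calc 2 ≤ q m := ih hm
        _ = q m ^ 1 := (pow_one _).symm
        _ ≤ q m ^ (m ^ r) := Nat.pow_le_pow_right (by omega) (Nat.one_le_pow _ _ (by omega))
  -- log of q n
  have hlog : ∀ n : ℕ, 1 ≤ n →
      Real.log (q n) = ((Nat.factorial (n - 1) : ℝ)) ^ r * Real.log q₁ := by
    intro n hn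
    induction n with
    | zero => omega
    | succ m ih =>
      rcases Nat.eq_or_lt_of_le hn with h | h
      · rw [← h]; simp [hq1]
      · have hm : 1 ≤ m := by omega
        obtain ⟨j, rfl⟩ : ∃ j, m = j + 1 := ⟨m - 1, by omega⟩
        rw [hrec _ hm, Nat.cast_pow, Real.log_pow, ih hm]
        simp only [Nat.add_sub_cancel, Nat.factorial_succ]
        push_cast
        rw [mul_pow]
        ring
  intro n hn t ht
  obtain ⟨k, rfl⟩ : ∃ k, n = k + 1 := ⟨n - 1, by omega⟩
  have hk1 : 1 ≤ k := by omega
  set m : ℕ := q (k + 1) ^ ((k + 1 - 1) ^ r) with hm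
  have hqn2 : 2 ≤ q (k + 1) := hq2 _ (by omega)
  have hQ1 : (1:ℝ) < (q (k + 1) : ℝ) := by exact_mod_cast by omega
  have hQ0 : (0:ℝ) < (q (k + 1) : ℝ) := by linarith
  have hlq₁ : (0:ℝ) < Real.log q₁ := Real.log_pos (by exact_mod_cast hq)
  -- the ratio of logs
  have hL : Real.log m / Real.log q₁ = ((k : ℝ) * (Nat.factorial k : ℝ)) ^ r := by
    have : Real.log m = ((k + 1 - 1) ^ r : ℕ) * Real.log (q (k + 1)) := by
      rw [hm, Nat.cast_pow, Real.log_pow]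
    rw [this, hlog (k + 1) (by omega), Nat.add_sub_cancel]
    field_simp
    push_cast
    ring
  set y : ℝ := ((k : ℝ) * (Nat.factorial k : ℝ)) ^ r with hy
  set S : Set ℝ := {x : ℝ | 1 ≤ x ∧ GammaR r x ≤ y} with hS
  have hK1 : (1:ℝ) ≤ (k : ℝ) := by exact_mod_cast hk1
  have hF1 : (1:ℝ) ≤ (Nat.factorial k : ℝ) :=
    Nat.one_le_cast.mpr (Nat.factorial_pos k)
  -- membership
  have hmem : ((k : ℝ) ^ r) ∈ S := by
    constructor
    · exact one_le_pow₀ hK1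
    · rw [gammaR_nat r hr1 k, hy]
      apply pow_le_pow_left₀ (by linarith)
      nlinarith
  -- upper bound for S
  have hub : ∀ x ∈ S, x ≤ ((k:ℝ) + 1) ^ r := by
    intro x hx
    by_contra hcon
    push_neg at hcon
    have h1 : GammaR r (((k:ℝ) + 1) ^ r) ≤ GammaR r x :=
      gammaR_mono hr1 (one_le_pow₀ (by linarith)) hcon.le
    have h2 : GammaR r (((k:ℝ) + 1) ^ r) = ((Nat.factorial (k+1) : ℝ)) ^ r := by
      have := gammaR_nat r hr1 (k + 1)
      rwa [Nat.cast_add, Nat.cast_one] at this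
    have h3 : y < ((Nat.factorial (k+1) : ℝ)) ^ r := by
      rw [hy, Nat.factorial_succ]
      apply pow_lt_pow_left₀ _ (by positivity) (by omega)
      push_cast
      nlinarith
    have := hx.2
    linarith
  have hbdd : BddAbove S := ⟨((k:ℝ) + 1) ^ r, hub⟩
  set I : ℝ := GammaRInv r y with hI
  have hIlb : (k : ℝ) ^ r ≤ I := le_csSup hbdd hmem
  have hIub : I ≤ ((k:ℝ) + 1) ^ r := csSup_le ⟨_, hmem⟩ hub
  have hIpos : (0:ℝ) < I := lt_of_lt_of_le (by positivity) hIlb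
  have hIne : I ≠ 0 := hIpos.ne'
  -- rewrite m as a power
  have hcast : (m : ℝ) = (q (k + 1) : ℝ) ^ (k ^ r) := by
    rw [hm, Nat.add_sub_cancel]; push_cast; ring
  have hrw : ∀ c : ℝ, (m : ℝ) ^ c = (q (k + 1) : ℝ) ^ (((k:ℝ) ^ r) * c) := by
    intro c
    rw [hcast, ← Real.rpow_natCast (q (k + 1) : ℝ) (k ^ r), ← Real.rpow_mul hQ0.le]
    push_cast
    ring_nf
  have hcastn : ((k:ℝ) + 1 - 1) = (k : ℝ) := by ring
  have hKr : (0:ℝ) < (k:ℝ) ^ r := by positivity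
  have hNr : (0:ℝ) < ((k:ℝ) + 1) ^ r := by positivity
  -- exponent of intScale2 : J bounds
  have hrne : (r : ℝ) ≠ 0 := by exact_mod_cast by omega
  have he0 : (0:ℝ) ≤ ((r:ℝ) - 2) / (r:ℝ) := by
    apply div_nonneg _ (by exact_mod_cast Nat.zero_le r)
    have : (4:ℝ) ≤ (r:ℝ) := by exact_mod_cast hr
    linarith
  have hpowrw : ∀ a : ℝ, 0 ≤ a → (a ^ r) ^ (((r:ℝ) - 2) / (r:ℝ)) = a ^ (r - 2) := by
    intro a ha
    rw [← Real.rpow_natCast a r, ← Real.rpow_mul ha]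
    have : (r:ℝ) * (((r:ℝ) - 2) / (r:ℝ)) = ((r - 2 : ℕ) : ℝ) := by
      field_simp
      push_cast [Nat.cast_sub (by omega : 2 ≤ r)]
      ring
    rw [this, Real.rpow_natCast]
  set J : ℝ := I ^ (((r:ℝ) - 2) / (r:ℝ)) with hJ
  have hJlb : (k:ℝ) ^ (r - 2) ≤ J := by
    rw [← hpowrw (k:ℝ) (by linarith)]
    exact Real.rpow_le_rpow (by positivity) hIlb he0
  have hJub : J ≤ ((k:ℝ) + 1) ^ (r - 2) := by
    rw [← hpowrw ((k:ℝ) + 1) (by linarith)]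
    exact Real.rpow_le_rpow hIpos.le hIub he0
  have hJpos : (0:ℝ) < J := Real.rpow_pos_of_pos hIpos _
  have hKr2 : (0:ℝ) < (k:ℝ) ^ (r - 2) := by positivity
  have hNr2 : (0:ℝ) < ((k:ℝ) + 1) ^ (r - 2) := by positivity
  have exp_iff := fun a b => (Real.rpow_le_rpow_left_iff (x := (q (k+1) : ℝ)) (y := a) (z := b) hQ1)
  constructor
  · constructor
    · -- lower bound intScale1
      rw [intScale1, hL, ← hI, hrw, exp_iff]
      push_cast [hcastn]
      calc (k:ℝ) ^ r * t / ((k:ℝ) + 1) ^ r = (k:ℝ) ^ r * (t / ((k:ℝ) + 1) ^ r) := by ring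
      _ ≤ (k:ℝ) ^ r * (t / I) :=
          mul_le_mul_of_nonneg_left (div_le_div_of_nonneg_left ht.le hIpos hIub) (by positivity)
    · -- upper bound intScale1
      rw [intScale1, hL, ← hI, hrw, exp_iff]
      calc (k:ℝ) ^ r * (t / I) ≤ I * (t / I) := by
            apply mul_le_mul_of_nonneg_right hIlb (by positivity)
      _ = t := by field_simp
  · constructor
    · -- lower bound intScale2
      rw [intScale2, hL, ← hI, ← hJ, hrw, exp_iff]
      push_cast [hcastn]
      calc (k:ℝ) ^ r * t / ((k:ℝ) + 1) ^ (r - 2)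
            = (k:ℝ) ^ r * (t / ((k:ℝ) + 1) ^ (r - 2)) := by ring
      _ ≤ (k:ℝ) ^ r * (t / J) :=
          mul_le_mul_of_nonneg_left (div_le_div_of_nonneg_left ht.le hJpos hJub) (by positivity)
    · -- upper bound intScale2
      rw [intScale2, hL, ← hI, ← hJ, hrw, exp_iff]
      push_cast [hcastn]
      have hsplit : (k:ℝ) ^ r = (k:ℝ) ^ (r - 2) * (k:ℝ) ^ 2 := by
        rw [← pow_add, Nat.sub_add_cancel (by omega)]
      calc (k:ℝ) ^ r * (t / J) ≤ (k:ℝ) ^ r * (t / ((k:ℝ) ^ (r - 2))) := by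
            apply mul_le_mul_of_nonneg_left _ (by positivity)
            apply div_le_div_of_nonneg_left ht.le hKr2 hJlb
      _ = (k:ℝ) ^ 2 * t := by rw [hsplit]; field_simp
end

section
/- Let (X,d) be a compact metric space, let T, S : X → X be continuous maps, let m be a positive integer and ε > 0. For 0 ≤ j ≤ m−1 let L_j ≥ 1 be a Lipschitz constant for the iterate T^j (with L_0 = 1). If sup_{x∈X} d(T x, S x) ≤ ε / (2·Σ_{j=0}^{m-1} L_j), then sup_{x∈X} d(T^i x, S^i x) ≤ ε/2 for all 0 ≤ i ≤ m−1, and consequently the minimal Bowen covering numbers satisfy N_{d_m^S}(4ε) ≤ N_{d_m^T}(2ε) ≤ N_{d_m^S}(ε). -/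
open MeasureTheory Filter Set
open scoped Topology ENNReal NNReal

noncomputable section

/-- The Bowen metric `d_n^T(x,y) = max_{0 ≤ i ≤ n-1} d(T^i x, T^i y)`. -/
def bowenDist {X : Type*} [PseudoMetricSpace X] (T : X → X) (n : ℕ) (x y : X) : ℝ :=
  (((Finset.range n).sup fun i => nndist (T^[i] x) (T^[i] y)) : ℝ≥0)

/-- `N_{d_n^T}(ε)`: the minimal number of `(ε,n)`-Bowen balls of `T` needed to cover the
whole space. -/
def bowenCoverNum {X : Type*} [PseudoMetricSpace X] (T : X → X) (n : ℕ) (ε : ℝ) : ℕ :=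
  sInf {N : ℕ | ∃ F : Finset X, F.card = N ∧ ∀ y : X, ∃ x ∈ F, bowenDist T n x y < ε}

end

lemma bowenDist_nonneg {X : Type*} [PseudoMetricSpace X] (T : X → X) (n : ℕ) (x y : X) :
    0 ≤ bowenDist T n x y := NNReal.coe_nonneg _

lemma dist_le_bowenDist {X : Type*} [PseudoMetricSpace X] (T : X → X) {n i : ℕ} (hi : i < n)
    (x y : X) : dist (T^[i] x) (T^[i] y) ≤ bowenDist T n x y := by
  rw [bowenDist, dist_nndist, NNReal.coe_le_coe]
  exact Finset.le_sup (f := fun i => nndist (T^[i] x) (T^[i] y)) (Finset.mem_range.2 hi)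

lemma bowenDist_le {X : Type*} [PseudoMetricSpace X] {T : X → X} {n : ℕ} {x y : X} {c : ℝ}
    (hc : 0 ≤ c) (h : ∀ i < n, dist (T^[i] x) (T^[i] y) ≤ c) : bowenDist T n x y ≤ c := by
  rw [bowenDist, ← Real.coe_toNNReal c hc, NNReal.coe_le_coe, Finset.sup_le_iff]
  intro i hi
  rw [← NNReal.coe_le_coe, Real.coe_toNNReal c hc, ← dist_nndist]
  exact h i (Finset.mem_range.1 hi)

lemma bowenDist_lt_iff {X : Type*} [PseudoMetricSpace X] {T : X → X} {n : ℕ} {x y : X} {c : ℝ}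
    (hc : 0 < c) : bowenDist T n x y < c ↔ ∀ i < n, dist (T^[i] x) (T^[i] y) < c := by
  rw [bowenDist, ← Real.coe_toNNReal c hc.le, NNReal.coe_lt_coe,
    Finset.sup_lt_iff (by simpa using hc : (⊥ : ℝ≥0) < c.toNNReal)]
  constructor
  · intro h i hi
    rw [dist_nndist]
    exact_mod_cast h i (Finset.mem_range.2 hi)
  · intro h i hi
    have := h i (Finset.mem_range.1 hi)
    rw [dist_nndist] at this
    exact_mod_cast this

/-- uniform continuity of all iterates up to n -/
lemma iterates_unif {X : Type*} [MetricSpace X] [CompactSpace X] (S : X → X)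
    (hS : Continuous S) (n : ℕ) {ε : ℝ} (hε : 0 < ε) :
    ∃ δ > 0, ∀ x y : X, dist x y < δ → ∀ i < n, dist (S^[i] x) (S^[i] y) < ε := by
  induction n with
  | zero => exact ⟨1, one_pos, fun x y _ i hi => absurd hi (Nat.not_lt_zero i)⟩
  | succ n ih =>
    obtain ⟨δ, hδpos, hδ⟩ := ih
    have hu : UniformContinuous S^[n] :=
      CompactSpace.uniformContinuous_of_continuous (hS.iterate n)
    obtain ⟨δ', hδ'pos, hδ'⟩ := Metric.uniformContinuous_iff.1 hu ε hε
    refine ⟨min δ δ', lt_min hδpos hδ'pos, fun x y hxy i hi => ?_⟩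
    rcases Nat.lt_succ_iff_lt_or_eq.1 hi with h | h
    · exact hδ x y (hxy.trans_le (min_le_left _ _)) i h
    · subst h
      exact hδ' (hxy.trans_le (min_le_right _ _))

lemma coverSet_nonempty {X : Type*} [MetricSpace X] [CompactSpace X] (S : X → X)
    (hS : Continuous S) (n : ℕ) {ε : ℝ} (hε : 0 < ε) :
    {N : ℕ | ∃ F : Finset X, F.card = N ∧ ∀ y : X, ∃ x ∈ F, bowenDist S n x y < ε}.Nonempty := by
  obtain ⟨δ, hδpos, hδ⟩ := iterates_unif S hS n hε
  obtain ⟨t, htf, htc⟩ := Metric.totallyBounded_iff.1 (isCompact_univ : IsCompact (Set.univ : Set X)).totallyBounded δ hδpos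
  refine ⟨htf.toFinset.card, htf.toFinset, rfl, fun y => ?_⟩
  have : y ∈ ⋃ z ∈ t, Metric.ball z δ := htc (Set.mem_univ y)
  obtain ⟨z, hz, hyz⟩ := Set.mem_iUnion₂.1 this
  refine ⟨z, htf.mem_toFinset.2 hz, (bowenDist_lt_iff hε).2 fun i hi => ?_⟩
  exact hδ z y (by rw [dist_comm]; exact Metric.mem_ball.1 hyz) i hi

/-- if `T, S` are continuous self-maps of a compact metric space, `L j ≥ 1`
is a Lipschitz constant for `T^j` (`L 0 = 1`) for `0 ≤ j ≤ m-1`, and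
`sup_x d(Tx, Sx) ≤ ε / (2 Σ_{j<m} L j)`, then `sup_x d(T^i x, S^i x) ≤ ε/2` for all
`i ≤ m-1`, and consequently `N_{d_m^S}(4ε) ≤ N_{d_m^T}(2ε) ≤ N_{d_m^S}(ε)`. -/
theorem stmt15 {X : Type*} [MetricSpace X] [CompactSpace X]
    (T S : X → X) (hT : Continuous T) (hS : Continuous S)
    (m : ℕ) (hm : 0 < m) (ε : ℝ) (hε : 0 < ε)
    (L : ℕ → ℝ≥0) (hL0 : L 0 = 1) (hL1 : ∀ j, j < m → 1 ≤ L j)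
    (hLip : ∀ j, j < m → LipschitzWith (L j) T^[j])
    (hclose : ∀ x : X, dist (T x) (S x) ≤ ε / (2 * ∑ j ∈ Finset.range m, (L j : ℝ))) :
    (∀ x : X, ∀ i, i < m → dist (T^[i] x) (S^[i] x) ≤ ε / 2) ∧
    bowenCoverNum S m (4 * ε) ≤ bowenCoverNum T m (2 * ε) ∧
    bowenCoverNum T m (2 * ε) ≤ bowenCoverNum S m ε := by
  set Ls : ℝ := ∑ j ∈ Finset.range m, (L j : ℝ) with hLs
  set δ : ℝ := ε / (2 * Ls) with hδdef
  have hLs1 : (1 : ℝ) ≤ Ls := by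
    calc (1 : ℝ) = (L 0 : ℝ) := by rw [hL0]; simp
    _ ≤ Ls := Finset.single_le_sum (f := fun j => (L j : ℝ))
        (fun j _ => (L j).coe_nonneg) (Finset.mem_range.2 hm)
  have hLspos : (0 : ℝ) < Ls := lt_of_lt_of_le one_pos hLs1
  have hδnn : 0 ≤ δ := div_nonneg hε.le (by positivity)
  -- main induction
  have key : ∀ i ≤ m, ∀ x : X,
      dist (T^[i] x) (S^[i] x) ≤ (∑ j ∈ Finset.range i, (L j : ℝ)) * δ := by
    intro i
    induction i with
    | zero => intro _ x; simp
    | succ i ih =>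
      intro hi x
      have him : i < m := hi
      have h1 : dist (T^[i+1] x) (S^[i+1] x)
          ≤ dist (T^[i] (T x)) (T^[i] (S x)) + dist (T^[i] (S x)) (S^[i] (S x)) := by
        rw [Function.iterate_succ_apply, Function.iterate_succ_apply]
        exact dist_triangle _ _ _
      have h2 : dist (T^[i] (T x)) (T^[i] (S x)) ≤ (L i : ℝ) * δ := by
        calc dist (T^[i] (T x)) (T^[i] (S x)) ≤ (L i : ℝ) * dist (T x) (S x) :=
          (hLip i him).dist_le_mul _ _
        _ ≤ (L i : ℝ) * δ := mul_le_mul_of_nonneg_left (hclose x) (L i).coe_nonneg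
      have h3 := ih him.le (S x)
      calc dist (T^[i+1] x) (S^[i+1] x)
          ≤ (L i : ℝ) * δ + (∑ j ∈ Finset.range i, (L j : ℝ)) * δ := by
            refine h1.trans (add_le_add h2 h3)
        _ = (∑ j ∈ Finset.range (i+1), (L j : ℝ)) * δ := by
            rw [Finset.sum_range_succ]; ring
  have part1 : ∀ x : X, ∀ i, i < m → dist (T^[i] x) (S^[i] x) ≤ ε / 2 := by
    intro x i hi
    refine (key i hi.le x).trans ?_
    have hsub : (∑ j ∈ Finset.range i, (L j : ℝ)) ≤ Ls :=
      Finset.sum_le_sum_of_subset_of_nonneg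
        (Finset.range_subset_range.2 hi.le) (fun j _ _ => (L j).coe_nonneg)
    calc (∑ j ∈ Finset.range i, (L j : ℝ)) * δ ≤ Ls * δ :=
        mul_le_mul_of_nonneg_right hsub hδnn
      _ = ε / 2 := by rw [hδdef]; field_simp
  refine ⟨part1, ?_, ?_⟩
  · -- N_S(4ε) ≤ N_T(2ε)
    refine csInf_le_csInf (OrderBot.bddBelow _) (coverSet_nonempty T hT m (by linarith)) ?_
    rintro N ⟨F, hF, hcov⟩
    refine ⟨F, hF, fun y => ?_⟩
    obtain ⟨x, hxF, hxy⟩ := hcov y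
    refine ⟨x, hxF, ?_⟩
    have : bowenDist S m x y ≤ bowenDist T m x y + ε := by
      refine bowenDist_le (add_nonneg (bowenDist_nonneg T m x y) hε.le) fun i hi => ?_
      calc dist (S^[i] x) (S^[i] y)
          ≤ dist (S^[i] x) (T^[i] x) + dist (T^[i] x) (T^[i] y) + dist (T^[i] y) (S^[i] y) :=
            dist_triangle4 _ _ _ _
        _ ≤ ε / 2 + bowenDist T m x y + ε / 2 := by
            refine add_le_add (add_le_add ?_ (dist_le_bowenDist T hi x y)) (part1 y i hi)
            rw [dist_comm]; exact part1 x i hi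
        _ = bowenDist T m x y + ε := by ring
    linarith
  · -- N_T(2ε) ≤ N_S(ε)
    refine csInf_le_csInf (OrderBot.bddBelow _) (coverSet_nonempty S hS m hε) ?_
    rintro N ⟨F, hF, hcov⟩
    refine ⟨F, hF, fun y => ?_⟩
    obtain ⟨x, hxF, hxy⟩ := hcov y
    refine ⟨x, hxF, ?_⟩
    have : bowenDist T m x y ≤ bowenDist S m x y + ε := by
      refine bowenDist_le (add_nonneg (bowenDist_nonneg S m x y) hε.le) fun i hi => ?_
      calc dist (T^[i] x) (T^[i] y)
          ≤ dist (T^[i] x) (S^[i] x) + dist (S^[i] x) (S^[i] y) + dist (S^[i] y) (T^[i] y) :=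
            dist_triangle4 _ _ _ _
        _ ≤ ε / 2 + bowenDist S m x y + ε / 2 := by
            refine add_le_add (add_le_add (part1 x i hi) (dist_le_bowenDist S hi x y)) ?_
            rw [dist_comm]; exact part1 y i hi
        _ = bowenDist S m x y + ε := by ring
    linarith
end
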